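/- Let X be a compact metric space and let DS(ℝ≥0, X) denote the set of dynamical systems on X with time ℝ≥0, topologized as a subspace of the space C(ℝ≥0 × X, X) of continuous maps with the compact-open topology. Then for every subset U ⊆ X, the set Φ[ANbhd; U] = {φ ∈ DS(ℝ≥0, X) : U is an attracting neighborhood for φ} is open in DS(ℝ≥0, X). In particular, Φ[ANbhd; U] equals the union over τ > 0 of the basic compact-open sets {φ : φ([τ,2τ] × closure U) ⊆ interior(U)}. -/

import Mathlib

open Set Topology NNReal

/-- The space of dynamical systems on `X` with time `ℝ≥0`, topologized as a subspace of
`C(ℝ≥0 × X, X)` with the compact-open topology. -/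
abbrev DS (X : Type*) [TopologicalSpace X] : Type _ :=
  {φ : C(ℝ≥0 × X, X) // (∀ x, φ (0, x) = x) ∧ ∀ t s x, φ (t, φ (s, x)) = φ (t + s, x)}

/-- The ω-limit set of `U` under `φ`. -/
def omegaLim {X : Type*} [TopologicalSpace X] (φ : ℝ≥0 × X → X) (U : Set X) : Set X :=
  ⋂ t : ℝ≥0, closure (⋃ s : ℝ≥0, ⋃ _ : t ≤ s, (fun x => φ (s, x)) '' U)

theorem aux_forward {X : Type*} [MetricSpace X] [CompactSpace X] (U : Set X) (φ : DS X)
    (hω : omegaLim (fun p => φ.1 p) U ⊆ interior U) :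
    ∃ τ : ℝ≥0, 0 < τ ∧
      (fun p => φ.1 p) '' (Set.Icc τ (2 * τ) ×ˢ closure U) ⊆ interior U := by
  set C : ℝ≥0 → Set X := fun t =>
    closure (⋃ s : ℝ≥0, ⋃ _ : t ≤ s, (fun x => φ.1 (s, x)) '' U) with hC
  have hmono : Antitone C := by
    intro a b hab
    exact closure_mono (iUnion_mono fun s => iUnion_subset fun hs =>
      subset_iUnion_of_subset (le_trans hab hs) le_rfl)
  have hcompl : IsCompact ((interior U)ᶜ) := (isOpen_interior.isClosed_compl).isCompact
  have hst : (interior U)ᶜ ∩ ⋂ t, C t = ∅ := by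
    rw [eq_empty_iff_forall_notMem]
    rintro x ⟨hx1, hx2⟩
    exact hx1 (hω hx2)
  obtain ⟨t₀, ht₀⟩ := hcompl.elim_directed_family_closed C (fun t => isClosed_closure) hst
    (fun a b => ⟨a ⊔ b, hmono le_sup_left, hmono le_sup_right⟩)
  have hsub : C t₀ ⊆ interior U := by
    intro x hx
    by_contra hxU
    exact absurd (eq_empty_iff_forall_notMem.mp ht₀ x ⟨hxU, hx⟩) (fun h => h)
  refine ⟨t₀ + 1, by positivity, ?_⟩
  rintro y ⟨⟨t, x⟩, ⟨⟨ht1, _⟩, hx⟩, rfl⟩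
  have hcont : Continuous fun z => φ.1 (t, z) := φ.1.continuous.comp (by continuity)
  have : φ.1 (t, x) ∈ closure ((fun z => φ.1 (t, z)) '' U) :=
    (image_closure_subset_closure_image hcont) ⟨x, hx, rfl⟩
  apply hsub
  refine closure_mono ?_ this
  exact subset_iUnion_of_subset t (subset_iUnion_of_subset (le_trans (le_add_right le_rfl) ht1)
    le_rfl)

theorem aux_backward {X : Type*} [MetricSpace X] [CompactSpace X] (U : Set X) (φ : DS X)
    (τ : ℝ≥0) (hτ : 0 < τ)
    (hmap : (fun p => φ.1 p) '' (Set.Icc τ (2 * τ) ×ˢ closure U) ⊆ interior U) :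
    omegaLim (fun p => φ.1 p) U ⊆ interior U := by
  have hφ : ∀ t, τ ≤ t → t ≤ 2 * τ → ∀ x ∈ closure U, φ.1 (t, x) ∈ interior U :=
    fun t h1 h2 x hx => hmap ⟨(t, x), ⟨⟨h1, h2⟩, hx⟩, rfl⟩
  -- all times ≥ τ map closure U into interior U
  have h2le : ∀ n : ℕ, 2 * τ ≤ ((n : ℝ≥0) + 2) * τ := fun n =>
    mul_le_mul_left le_add_self τ
  have h1le : ∀ n : ℕ, τ ≤ ((n : ℝ≥0) + 2) * τ := fun n =>
    le_mul_of_one_le_left zero_le (one_le_two.trans le_add_self)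
  have hτ2 : τ ≤ 2 * τ := le_mul_of_one_le_left zero_le one_le_two
  have key : ∀ n : ℕ, ∀ t : ℝ≥0, τ ≤ t → t ≤ (n + 2) * τ →
      ∀ x ∈ closure U, φ.1 (t, x) ∈ interior U := by
    intro n
    induction n with
    | zero => intro t h1 h2 x hx; exact hφ t h1 (by simpa using h2) x hx
    | succ n ih =>
      intro t h1 h2 x hx
      by_cases hcase : t ≤ (n + 2) * τ
      · exact ih t h1 hcase x hx
      push_neg at hcase
      have h2τ : 2 * τ ≤ t := (h2le n).trans hcase.le
      have hsub1 : τ ≤ t - τ := le_tsub_of_add_le_left (by rw [← two_mul]; exact h2τ)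
      have hsub2 : t - τ ≤ (n + 2) * τ := by
        rw [tsub_le_iff_right]
        calc t ≤ ((n : ℝ≥0) + 1 + 2) * τ := by push_cast at h2; exact h2
          _ = ((n : ℝ≥0) + 2) * τ + τ := by ring
      have heq : φ.1 (τ, φ.1 (t - τ, x)) = φ.1 (t, x) := by
        rw [φ.2.2, add_tsub_cancel_of_le h1]
      rw [← heq]
      exact hφ τ le_rfl hτ2 _
        (subset_closure (interior_subset (ih (t - τ) hsub1 hsub2 x hx)))
  have key' : ∀ t : ℝ≥0, τ ≤ t → ∀ x ∈ closure U, φ.1 (t, x) ∈ interior U := by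
    intro t ht x hx
    obtain ⟨n, hn⟩ := exists_nat_ge (t / τ)
    refine key n t ht ?_ x hx
    have := (div_le_iff₀ hτ).mp hn
    calc t ≤ n * τ := this
      _ ≤ ((n : ℝ≥0) + 2) * τ := mul_le_mul_left le_self_add τ
  -- the compact attracting set
  set K : Set X := (fun p => φ.1 p) '' (Set.Icc τ (2 * τ) ×ˢ closure U) with hK
  have hKcomp : IsCompact K :=
    (isCompact_Icc.prod (isClosed_closure.isCompact)).image φ.1.continuous
  have hKsub : K ⊆ interior U := hmap
  -- for s ≥ 2τ, φ_s(U) ⊆ K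
  have hsK : ∀ s : ℝ≥0, 2 * τ ≤ s → ∀ x ∈ U, φ.1 (s, x) ∈ K := by
    intro s hs x hx
    have h1 : τ ≤ s - τ := le_tsub_of_add_le_left (by rw [← two_mul]; exact hs)
    have heq : φ.1 (τ, φ.1 (s - τ, x)) = φ.1 (s, x) := by
      rw [φ.2.2, add_tsub_cancel_of_le (hτ2.trans hs)]
    rw [← heq]
    exact ⟨(τ, φ.1 (s - τ, x)), ⟨⟨le_rfl, hτ2⟩,
      subset_closure (interior_subset (key' (s - τ) h1 x (subset_closure hx)))⟩, rfl⟩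
  intro y hy
  have hy2 : y ∈ closure (⋃ s : ℝ≥0, ⋃ _ : 2 * τ ≤ s, (fun x => φ.1 (s, x)) '' U) :=
    Set.mem_iInter.mp hy (2 * τ)
  have hKcl : closure (⋃ s : ℝ≥0, ⋃ _ : 2 * τ ≤ s, (fun x => φ.1 (s, x)) '' U) ⊆ K := by
    rw [← hKcomp.isClosed.closure_eq]
    refine closure_mono ?_
    refine iUnion_subset fun s => iUnion_subset fun hs => ?_
    rintro z ⟨x, hx, rfl⟩
    exact hsK s hs x hx
  exact hKsub (hKcl hy2)

/-- For a compact metric space `X` and any `U ⊆ X`, the set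
`Φ[ANbhd;U] = {φ ∈ DS(ℝ≥0,X) : U is an attracting neighborhood for φ}` is open, and equals
the union over `τ > 0` of the basic compact-open sets `{φ : φ([τ,2τ] × cl U) ⊆ int U}`. -/
theorem stmt6 {X : Type*} [MetricSpace X] [CompactSpace X] (U : Set X) :
    IsOpen {φ : DS X | omegaLim (fun p => φ.1 p) U ⊆ interior U} ∧
      {φ : DS X | omegaLim (fun p => φ.1 p) U ⊆ interior U} =
        ⋃ τ : ℝ≥0, ⋃ _ : 0 < τ,
          {φ : DS X | (fun p => φ.1 p) '' (Set.Icc τ (2 * τ) ×ˢ closure U) ⊆ interior U} := by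
  have key : {φ : DS X | omegaLim (fun p => φ.1 p) U ⊆ interior U} =
      ⋃ τ : ℝ≥0, ⋃ _ : 0 < τ,
        {φ : DS X | (fun p => φ.1 p) '' (Set.Icc τ (2 * τ) ×ˢ closure U) ⊆ interior U} := by
    ext φ
    simp only [mem_iUnion, mem_setOf_eq]
    exact ⟨fun h => by simpa using aux_forward U φ h,
      fun ⟨τ, hτ, hmap⟩ => aux_backward U φ τ hτ hmap⟩
  refine ⟨?_, key⟩
  rw [key]
  refine isOpen_iUnion fun τ => isOpen_iUnion fun hτ => ?_
  have hset : {φ : DS X | (fun p => φ.1 p) '' (Set.Icc τ (2 * τ) ×ˢ closure U) ⊆ interior U} =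
      Subtype.val ⁻¹'
        {f : C(ℝ≥0 × X, X) | MapsTo f (Set.Icc τ (2 * τ) ×ˢ closure U) (interior U)} := by
    ext φ
    simp only [mem_setOf_eq, mem_preimage]
    exact Set.mapsTo_iff_image_subset.symm
  rw [hset]
  exact (ContinuousMap.isOpen_setOf_mapsTo
    (isCompact_Icc.prod (isClosed_closure.isCompact)) isOpen_interior).preimage
    continuous_subtype_val
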